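/- Let φ_u(s) = μ_u(s) - D and φ_v(s) = μ_v(s) - D, and define on I = (λ_u, λ_v) the function H(s) = D·φ_u(s)(φ_v(s) - b)/(a·φ_v(s)), where a, b > 0. Then H is strictly increasing on I, H(s) → 0 as s → λ_u⁺, and H(s) → +∞ as s → λ_v⁻. -/

import Mathlib

open Set Filter Topology

/-- The function `H(s) = D·φu(s)(φv(s) - b)/(a·φv(s))` is strictly increasing on
`I = (lu, lv)`, tends to `0` at `lu⁺` and to `+∞` at `lv⁻`. -/
theorem chemostat_H_strict_mono_and_limits
    (D a b lu lv : ℝ) (hD : 0 < D) (ha : 0 < a) (hb : 0 < b) (hlt : lu < lv)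
    (μu μv μu' μv' : ℝ → ℝ)
    (hμu_cont : Continuous μu) (hμv_cont : Continuous μv)
    (hμu_deriv : ∀ s ∈ Icc lu lv, HasDerivAt μu (μu' s) s)
    (hμv_deriv : ∀ s ∈ Icc lu lv, HasDerivAt μv (μv' s) s)
    (hμu'_pos : ∀ s ∈ Icc lu lv, 0 < μu' s)
    (hμv'_pos : ∀ s ∈ Icc lu lv, 0 < μv' s)
    (hbu : μu lu = D) (hbv : μv lv = D)
    (hsign : ∀ s ∈ Ioo lu lv, μv s < D ∧ D < μu s) :
    StrictMonoOn (fun s => D * ((μu s - D) * ((μv s - D) - b)) / (a * (μv s - D)))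
        (Ioo lu lv) ∧
    Tendsto (fun s => D * ((μu s - D) * ((μv s - D) - b)) / (a * (μv s - D)))
        (𝓝[>] lu) (𝓝 0) ∧
    Tendsto (fun s => D * ((μu s - D) * ((μv s - D) - b)) / (a * (μv s - D)))
        (𝓝[<] lv) atTop := by
  have hμv_mono : StrictMonoOn μv (Icc lu lv) := by
    apply strictMonoOn_of_deriv_pos (convex_Icc _ _) hμv_cont.continuousOn
    intro x hx
    rw [interior_Icc] at hx
    rw [(hμv_deriv x (Ioo_subset_Icc_self hx)).deriv]
    exact hμv'_pos x (Ioo_subset_Icc_self hx)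
  have hμu_mono : StrictMonoOn μu (Icc lu lv) := by
    apply strictMonoOn_of_deriv_pos (convex_Icc _ _) hμu_cont.continuousOn
    intro x hx
    rw [interior_Icc] at hx
    rw [(hμu_deriv x (Ioo_subset_Icc_self hx)).deriv]
    exact hμu'_pos x (Ioo_subset_Icc_self hx)
  have hvlu : μv lu < D := by
    have := hμv_mono (left_mem_Icc.2 hlt.le) (right_mem_Icc.2 hlt.le) hlt
    rwa [hbv] at this
  have hulv : D < μu lv := by
    have := hμu_mono (left_mem_Icc.2 hlt.le) (right_mem_Icc.2 hlt.le) hlt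
    rwa [hbu] at this
  refine ⟨?_, ?_, ?_⟩
  · -- strict monotonicity
    apply strictMonoOn_of_deriv_pos (convex_Ioo _ _)
    · apply ContinuousOn.div
      · exact (continuous_const.mul ((hμu_cont.sub continuous_const).mul
          ((hμv_cont.sub continuous_const).sub continuous_const))).continuousOn
      · exact (continuous_const.mul (hμv_cont.sub continuous_const)).continuousOn
      · intro x hx
        have hq : μv x - D < 0 := by linarith [(hsign x hx).1]
        exact mul_ne_zero ha.ne' hq.ne
    · intro x hx
      rw [interior_Ioo] at hx
      have hxI : x ∈ Icc lu lv := Ioo_subset_Icc_self hx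
      have hu := hμu_deriv x hxI
      have hv := hμv_deriv x hxI
      have hq : μv x - D < 0 := by linarith [(hsign x hx).1]
      have hp : 0 < μu x - D := by linarith [(hsign x hx).2]
      have hden : a * (μv x - D) ≠ 0 := mul_ne_zero ha.ne' hq.ne
      have hnum : HasDerivAt (fun s => D * ((μu s - D) * ((μv s - D) - b)))
          (D * (μu' x * ((μv x - D) - b) + (μu x - D) * μv' x)) x :=
        ((hu.sub_const D).mul ((hv.sub_const D).sub_const b)).const_mul D
      have hden' : HasDerivAt (fun s => a * (μv s - D)) (a * μv' x) x :=
        (hv.sub_const D).const_mul a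
      have hdiv := hnum.div hden' hden
      rw [(show deriv (fun s => D * ((μu s - D) * ((μv s - D) - b)) / (a * (μv s - D))) x = _ from hdiv.deriv)]
      apply div_pos
      · have h1 := hμu'_pos x hxI
        have h2 := hμv'_pos x hxI
        have hqb : μv x - D - b < 0 := by linarith
        nlinarith [mul_pos h1 (mul_pos_of_neg_of_neg hq hqb),
          mul_pos (mul_pos hp h2) hb, mul_pos hD ha]
      · positivity
  · -- limit at lu⁺
    have hc : ContinuousAt (fun s => D * ((μu s - D) * ((μv s - D) - b)) /
        (a * (μv s - D))) lu := by
      apply ContinuousAt.div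
      · exact (continuous_const.mul ((hμu_cont.sub continuous_const).mul
          ((hμv_cont.sub continuous_const).sub continuous_const))).continuousAt
      · exact (continuous_const.mul (hμv_cont.sub continuous_const)).continuousAt
      · exact mul_ne_zero ha.ne' (by linarith : μv lu - D ≠ 0)
    have h0 : D * ((μu lu - D) * ((μv lu - D) - b)) / (a * (μv lu - D)) = 0 := by
      rw [hbu]; simp
    have ht : Tendsto (fun s => D * ((μu s - D) * ((μv s - D) - b)) /
        (a * (μv s - D))) (𝓝[>] lu)
        (𝓝 (D * ((μu lu - D) * ((μv lu - D) - b)) / (a * (μv lu - D)))) :=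
      hc.tendsto.mono_left nhdsWithin_le_nhds
    rwa [h0] at ht
  · -- limit at lv⁻
    have hnegden : Tendsto (fun s => -(a * (μv s - D))) (𝓝[<] lv) (𝓝[>] 0) := by
      apply tendsto_nhdsWithin_of_tendsto_nhds_of_eventually_within
      · have : Tendsto (fun s => -(a * (μv s - D))) (𝓝 lv)
            (𝓝 (-(a * (μv lv - D)))) :=
          ((continuous_const.mul (hμv_cont.sub continuous_const)).neg).continuousAt
        have h2 : Tendsto (fun s => -(a * (μv s - D))) (𝓝[<] lv)
            (𝓝 (-(a * (μv lv - D)))) := this.mono_left nhdsWithin_le_nhds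
        simpa [hbv] using h2
      · filter_upwards [Ioo_mem_nhdsLT_of_mem ⟨hlt, le_refl lv⟩] with s hs
        have hq : μv s - D < 0 := by linarith [(hsign s hs).1]
        have : a * (μv s - D) < 0 := mul_neg_of_pos_of_neg ha hq
        simpa using this
    have hinv : Tendsto (fun s => (-(a * (μv s - D)))⁻¹) (𝓝[<] lv) atTop :=
      tendsto_inv_nhdsGT_zero.comp hnegden
    have hnum : Tendsto (fun s => -(D * ((μu s - D) * ((μv s - D) - b))))
        (𝓝[<] lv) (𝓝 (D * (μu lv - D) * b)) := by
      have : Tendsto (fun s => -(D * ((μu s - D) * ((μv s - D) - b)))) (𝓝 lv)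
          (𝓝 (-(D * ((μu lv - D) * ((μv lv - D) - b))))) :=
        ((continuous_const.mul ((hμu_cont.sub continuous_const).mul
          ((hμv_cont.sub continuous_const).sub continuous_const))).neg).continuousAt
      have heq : -(D * ((μu lv - D) * ((μv lv - D) - b))) = D * (μu lv - D) * b := by
        rw [hbv]; ring
      rw [heq] at this
      exact this.mono_left nhdsWithin_le_nhds
    have hC : 0 < D * (μu lv - D) * b := by
      have : 0 < μu lv - D := by linarith
      positivity
    have := hnum.pos_mul_atTop hC hinv
    refine this.congr fun s => ?_
    simp [div_eq_mul_inv, inv_neg]
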